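/- Let E and E₁ be finite-dimensional real inner product spaces, A : E → E₁ a surjective linear map with adjoint A*, and let δ > 0 be such that ‖A*w‖ ≥ δ‖w‖ for all w ∈ E₁. Let f ∈ E₁, λ > 0, ν > 0, and let J : E → [0, ∞). For u ∈ E set J_{ω,u}(v) := J(v) + ω‖v − u‖², and assume that for every u ∈ E the function J_{ω,u} is ν-strongly convex and that there exist constants K̃, L̃ ≥ 0 (independent of u) such that ‖ξ‖ ≤ K̃ J_{ω,u}(v) + L̃ whenever ξ is a subgradient of J_{ω,u} at v. Let v̄_u be the unique minimizer of J_{ω,u} on {v ∈ E : Av = f}. Then there exist positive constants C₁ and C₂, depending only on δ, ν, K̃, L̃ and not on u, such that: whenever q_0 ∈ E₁ and the sequences (v_{k,u})_{k≥1}, (q_k)_{k≥1} satisfy that v_{k,u} minimizes v ↦ J_{ω,u}(v) − ⟨q_{k-1}, Av⟩ + λ‖Av − f‖² over E and q_k = q_{k-1} + 2λ(f − A v_{k,u}), one has ‖v_{k,u} − v̄_u‖² ≤ [C₁(1 + ‖q_0‖) + C₂ J_{ω,u}(v̄_u)]·‖A v_{k,u} − f‖ for all k ≥ 1. -/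

import Mathlib

open RealInnerProductSpace

private lemma le_of_small (X Y c : ℝ) (h : ∀ t : ℝ, 0 < t → t ≤ 1 → X ≤ Y + t * c) :
    X ≤ Y := by
  by_contra h'
  push_neg at h'
  have hc : 0 < c := by
    have := h 1 one_pos le_rfl
    nlinarith
  have hd : 0 < (X - Y) / (2 * c) := div_pos (by linarith) (by linarith)
  have ht0 : 0 < min 1 ((X - Y) / (2 * c)) := lt_min one_pos hd
  have h2 := h _ ht0 (min_le_left _ _)
  have h1 : min 1 ((X - Y) / (2 * c)) ≤ (X - Y) / (2 * c) := min_le_right _ _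
  have hle : min 1 ((X - Y) / (2 * c)) * c ≤ (X - Y) / 2 := by
    calc min 1 ((X - Y) / (2 * c)) * c ≤ (X - Y) / (2 * c) * c :=
          mul_le_mul_of_nonneg_right h1 hc.le
      _ = (X - Y) / 2 := by field_simp
  linarith

section Aux

variable {E : Type*} [NormedAddCommGroup E] [InnerProductSpace ℝ E]

private lemma norm_combo (x y : E) {a b : ℝ} (hab : a + b = 1) :
    ‖a • x + b • y‖ ^ 2 = a * ‖x‖ ^ 2 + b * ‖y‖ ^ 2 - a * b * ‖x - y‖ ^ 2 := by
  have hb : b = 1 - a := by linarith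
  subst hb
  have e1 : ‖a • x‖ ^ 2 = a ^ 2 * ‖x‖ ^ 2 := by
    rw [norm_smul, Real.norm_eq_abs, mul_pow, sq_abs]
  have e2 : ‖(1 - a) • y‖ ^ 2 = (1 - a) ^ 2 * ‖y‖ ^ 2 := by
    rw [norm_smul, Real.norm_eq_abs, mul_pow, sq_abs]
  have e3 : ⟪a • x, (1 - a) • y⟫ = a * ((1 - a) * ⟪x, y⟫) := by
    rw [real_inner_smul_left, real_inner_smul_right]
  have h2 : ‖x - y‖ ^ 2 = ‖x‖ ^ 2 - 2 * ⟪x, y⟫ + ‖y‖ ^ 2 := by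
    rw [norm_sub_sq_real]
  rw [norm_add_sq_real, e1, e2, e3, h2]
  ring

private lemma convexOn_const_norm_sq {c : ℝ} (hc : 0 ≤ c) :
    ConvexOn ℝ Set.univ (fun v : E => c * ‖v‖ ^ 2) := by
  refine ⟨convex_univ, fun x _ y _ a b ha hb hab => ?_⟩
  simp only [smul_eq_mul]
  rw [norm_combo x y hab]
  have h1 : 0 ≤ a * b * ‖x - y‖ ^ 2 := by positivity
  nlinarith

private lemma sc_combo {ν : ℝ} {F : E → ℝ}
    (hF : ConvexOn ℝ Set.univ (fun v => F v - ν / 2 * ‖v‖ ^ 2)) {x y : E} {a b : ℝ}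
    (ha : 0 ≤ a) (hb : 0 ≤ b) (hab : a + b = 1) :
    F (a • x + b • y) ≤ a * F x + b * F y - ν / 2 * (a * b) * ‖x - y‖ ^ 2 := by
  have h := hF.2 (Set.mem_univ x) (Set.mem_univ y) ha hb hab
  simp only [smul_eq_mul] at h
  rw [norm_combo x y hab] at h
  nlinarith [h]

private lemma sc_min {ν : ℝ} (hν : 0 < ν) {F : E → ℝ}
    (hF : ConvexOn ℝ Set.univ (fun v => F v - ν / 2 * ‖v‖ ^ 2)) {x : E}
    (hx : ∀ w, F x ≤ F w) (w : E) :
    F x + ν / 2 * ‖w - x‖ ^ 2 ≤ F w := by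
  have key : ∀ t : ℝ, 0 < t → t ≤ 1 →
      ν / 2 * ‖w - x‖ ^ 2 ≤ (F w - F x) + t * (ν / 2 * ‖w - x‖ ^ 2) := by
    intro t ht0 ht1
    have hcombo := sc_combo hF (x := x) (y := w) (a := 1 - t) (b := t)
      (by linarith) ht0.le (by ring)
    have hmin := hx ((1 - t) • x + t • w)
    have hrev : ‖x - w‖ = ‖w - x‖ := norm_sub_rev _ _
    rw [hrev] at hcombo
    have h3 : 0 ≤ t * ((F w - F x) - ν / 2 * (1 - t) * ‖w - x‖ ^ 2) := by nlinarith
    nlinarith [h3, ht0]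
  linarith [le_of_small (ν / 2 * ‖w - x‖ ^ 2) (F w - F x) (ν / 2 * ‖w - x‖ ^ 2) key]

private lemma convexOn_neg_inner (ξ : E) :
    ConvexOn ℝ Set.univ (fun v : E => -⟪ξ, v⟫) := by
  refine ⟨convex_univ, fun x _ y _ a b ha hb hab => ?_⟩
  simp only [smul_eq_mul]
  rw [inner_add_right, real_inner_smul_right, real_inner_smul_right]
  ring_nf
  exact le_of_eq (by ring)
private lemma subgrad_strong {ν : ℝ} (hν : 0 < ν) {F : E → ℝ}
    (hF : ConvexOn ℝ Set.univ (fun v => F v - ν / 2 * ‖v‖ ^ 2)) {x ξ : E}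
    (hξ : ∀ w, F x + ⟪ξ, w - x⟫ ≤ F w) (w : E) :
    F x + ⟪ξ, w - x⟫ + ν / 2 * ‖w - x‖ ^ 2 ≤ F w := by
  have hconv : ConvexOn ℝ Set.univ (fun v => (F v - ⟪ξ, v⟫) - ν / 2 * ‖v‖ ^ 2) := by
    have h := hF.add (convexOn_neg_inner ξ)
    convert h using 1
    · rfl
    funext v
    simp only [Pi.add_apply]
    ring
  have hmin : ∀ w', F x - ⟪ξ, x⟫ ≤ F w' - ⟪ξ, w'⟫ := by
    intro w'
    have h1 := hξ w'
    rw [inner_sub_right] at h1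
    linarith
  have h2 := sc_min hν hconv hmin w
  have hid : ⟪ξ, w - x⟫ = ⟪ξ, w⟫ - ⟪ξ, x⟫ := inner_sub_right _ _ _
  try simp only at h2
  linarith

private lemma exists_subgradient [FiniteDimensional ℝ E] {g : E → ℝ}
    (hg : ConvexOn ℝ Set.univ g) (x₀ : E) :
    ∃ ξ : E, ∀ w, g x₀ + ⟪ξ, w - x₀⟫ ≤ g w := by
  have hcont : Continuous g := by
    have := hg.continuousOn isOpen_univ
    rwa [continuousOn_univ] at this
  set s : Set (E × ℝ) := {p | g p.1 < p.2} with hs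
  have hsopen : IsOpen s := by
    have he : s = (fun p : E × ℝ => p.2 - g p.1) ⁻¹' Set.Ioi 0 := by
      ext p; simp [hs, sub_pos]
    rw [he]
    exact (continuous_snd.sub (hcont.comp continuous_fst)).isOpen_preimage _ isOpen_Ioi
  have hsconv : Convex ℝ s := by
    rintro ⟨p1, p2⟩ hp ⟨r1, r2⟩ hr a b ha hb hab
    simp only [hs, Set.mem_setOf_eq] at hp hr ⊢
    simp only [Prod.smul_mk, Prod.mk_add_mk, smul_eq_mul]
    have hcv := hg.2 (Set.mem_univ p1) (Set.mem_univ r1) ha hb hab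
    simp only [smul_eq_mul] at hcv
    rcases eq_or_lt_of_le ha with h0 | ha'
    · have hb1 : b = 1 := by linarith
      subst hb1
      simp only [← h0, zero_smul, zero_add, one_smul, zero_mul, one_mul] at hcv ⊢
      linarith
    · have h1 : a * g p1 < a * p2 := by exact mul_lt_mul_of_pos_left hp ha'
      have h2 : b * g r1 ≤ b * r2 := mul_le_mul_of_nonneg_left hr.le hb
      calc g (a • p1 + b • r1) ≤ a * g p1 + b * g r1 := hcv
        _ < a * p2 + b * r2 := by linarith
  have hx : (x₀, g x₀) ∉ s := by simp [hs]
  obtain ⟨F, hF⟩ := geometric_hahn_banach_open_point hsconv hsopen hx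
  set c : ℝ := F (0, 1) with hc
  have hdecomp : ∀ (w : E) (t : ℝ), F (w, t) = F (w, 0) + t * c := by
    intro w t
    have he : (w, t) = (w, (0 : ℝ)) + t • ((0 : E), (1 : ℝ)) := by
      simp [Prod.ext_iff]
    rw [he, map_add, map_smul]
    simp [hc]
  have hcneg : c < 0 := by
    have h1 := hF (x₀, g x₀ + 1) (by simp [hs])
    rw [hdecomp, hdecomp x₀ (g x₀)] at h1
    nlinarith
  have key : ∀ w, F (w, 0) + g w * c ≤ F (x₀, 0) + g x₀ * c := by
    intro w
    by_contra hcon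
    push_neg at hcon
    set d : ℝ := (F (w, 0) + g w * c) - (F (x₀, 0) + g x₀ * c) with hd
    have hdpos : 0 < d := by simp only [hd]; linarith
    have hcpos : 0 < -c := by linarith
    have hmem : (w, g w + d / (-c)) ∈ s := by
      simp only [hs, Set.mem_setOf_eq]
      have := div_pos hdpos hcpos
      linarith
    have h2 := hF _ hmem
    rw [hdecomp, hdecomp x₀ (g x₀)] at h2
    have he : (g w + d / (-c)) * c = g w * c - d := by
      have hc0 : c ≠ 0 := hcneg.ne
      field_simp
      ring
    rw [he] at h2
    simp only [hd] at h2
    linarith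
  set φ : E →L[ℝ] ℝ := F.comp (ContinuousLinearMap.inl ℝ E ℝ) with hφ
  have hφval : ∀ w : E, φ w = F (w, 0) := fun w => rfl
  refine ⟨(-c)⁻¹ • (InnerProductSpace.toDual ℝ E).symm φ, fun w => ?_⟩
  have hcpos : 0 < -c := by linarith
  have hinner : ⟪(-c)⁻¹ • (InnerProductSpace.toDual ℝ E).symm φ, w - x₀⟫
      = (-c)⁻¹ * (F (w, 0) - F (x₀, 0)) := by
    rw [real_inner_smul_left, InnerProductSpace.toDual_symm_apply, map_sub]
    rw [hφval, hφval]
  rw [hinner]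
  have hkey := key w
  have h6 : (-c)⁻¹ * (F (w, 0) - F (x₀, 0)) ≤ (-c)⁻¹ * ((g w - g x₀) * (-c)) := by
    apply mul_le_mul_of_nonneg_left _ (by positivity)
    nlinarith
  have hcne : c ≠ 0 := ne_of_lt hcneg
  have h7 : (-c)⁻¹ * ((g w - g x₀) * (-c)) = g w - g x₀ := by
    field_simp
  rw [h7] at h6
  linarith

end Aux

private lemma aug_subgrad {E E₁ : Type*} [NormedAddCommGroup E] [InnerProductSpace ℝ E]
    [NormedAddCommGroup E₁] [InnerProductSpace ℝ E₁]
    (A : E →ₗ[ℝ] E₁) (f qk : E₁) {lam : ℝ} (hlam : 0 < lam) {G : E → ℝ}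
    (hG : ConvexOn ℝ Set.univ G) {v : E}
    (hmin : ∀ w, G v - ⟪qk, A v⟫ + lam * ‖A v - f‖ ^ 2
      ≤ G w - ⟪qk, A w⟫ + lam * ‖A w - f‖ ^ 2)
    (w : E) : G v + ⟪qk + (2 * lam) • (f - A v), A w - A v⟫ ≤ G w := by
  have key : ∀ t : ℝ, 0 < t → t ≤ 1 →
      ⟪qk + (2 * lam) • (f - A v), A w - A v⟫
        ≤ (G w - G v) + t * (lam * ‖A w - A v‖ ^ 2) := by
    intro t ht0 ht1
    have hz := hmin ((1 - t) • v + t • w)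
    have hconv := hG.2 (Set.mem_univ v) (Set.mem_univ w)
      (by linarith : (0 : ℝ) ≤ 1 - t) ht0.le (by ring)
    simp only [smul_eq_mul] at hconv
    have hAz : A ((1 - t) • v + t • w) = A v + t • (A w - A v) := by
      rw [map_add, map_smul, map_smul, smul_sub]
      module
    rw [hAz] at hz
    have hinner : ⟪qk, A v + t • (A w - A v)⟫ = ⟪qk, A v⟫ + t * ⟪qk, A w - A v⟫ := by
      rw [inner_add_right, real_inner_smul_right]
    have hnorm : ‖A v + t • (A w - A v) - f‖ ^ 2
        = ‖A v - f‖ ^ 2 + 2 * t * ⟪A v - f, A w - A v⟫ + t ^ 2 * ‖A w - A v‖ ^ 2 := by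
      have he : A v + t • (A w - A v) - f = (A v - f) + t • (A w - A v) := by
        rw [add_sub_right_comm]
      rw [he, norm_add_sq_real, real_inner_smul_right, norm_smul, Real.norm_eq_abs,
        mul_pow, sq_abs]
      ring
    rw [hinner, hnorm] at hz
    have hq : ⟪qk + (2 * lam) • (f - A v), A w - A v⟫
        = ⟪qk, A w - A v⟫ - 2 * lam * ⟪A v - f, A w - A v⟫ := by
      rw [inner_add_left, real_inner_smul_left,
        show f - A v = -(A v - f) from (neg_sub _ _).symm, inner_neg_left]
      ring
    rw [hq]
    have h3 : 0 ≤ t * ((G w - G v) - ⟪qk, A w - A v⟫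
        + 2 * lam * ⟪A v - f, A w - A v⟫ + lam * t * ‖A w - A v‖ ^ 2) := by
      nlinarith [hz, hconv]
    nlinarith [h3, ht0]
  linarith [le_of_small _ _ _ key]

private lemma exists_multiplier {E E₁ : Type*} [NormedAddCommGroup E] [InnerProductSpace ℝ E]
    [NormedAddCommGroup E₁] [InnerProductSpace ℝ E₁] [FiniteDimensional ℝ E₁]
    (A : E →ₗ[ℝ] E₁) (hA : Function.Surjective A) (f : E₁) {G : E → ℝ}
    (hG : ConvexOn ℝ Set.univ G) (hlb : BddBelow (Set.range G)) {vb : E}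
    (hvbf : A vb = f) (hvbmin : ∀ w, A w = f → G vb ≤ G w) :
    ∃ p : E₁, ∀ w, G vb + ⟪p, A w - f⟫ ≤ G w := by
  set m : E₁ → ℝ := fun y => sInf (G '' {v | A v = y}) with hm
  have hne : ∀ y : E₁, (G '' {v | A v = y}).Nonempty := by
    intro y
    obtain ⟨v, hv⟩ := hA y
    exact ⟨G v, v, hv, rfl⟩
  have hbdd : ∀ y : E₁, BddBelow (G '' {v | A v = y}) :=
    fun y => hlb.mono (Set.image_subset_range _ _)
  have hmle : ∀ w : E, m (A w) ≤ G w := fun w => csInf_le (hbdd _) ⟨w, rfl, rfl⟩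
  have hmf : G vb ≤ m f := le_csInf (hne f) (by rintro x ⟨v, hv, rfl⟩; exact hvbmin v hv)
  have hmconv : ConvexOn ℝ Set.univ m := by
    refine ⟨convex_univ, fun y₁ _ y₂ _ a b ha hb hab => ?_⟩
    apply le_of_forall_pos_le_add
    intro ε hε
    obtain ⟨x₁, ⟨v₁, hv₁, rfl⟩, hx₁⟩ := (csInf_lt_iff (hbdd y₁) (hne y₁)).mp
      (lt_add_of_pos_right (m y₁) hε)
    obtain ⟨x₂, ⟨v₂, hv₂, rfl⟩, hx₂⟩ := (csInf_lt_iff (hbdd y₂) (hne y₂)).mp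
      (lt_add_of_pos_right (m y₂) hε)
    simp only [Set.mem_setOf_eq] at hv₁ hv₂
    have hmem : G (a • v₁ + b • v₂) ∈ G '' {v | A v = a • y₁ + b • y₂} := by
      refine ⟨_, ?_, rfl⟩
      simp only [Set.mem_setOf_eq, map_add, map_smul, hv₁, hv₂]
    have h1 := csInf_le (hbdd _) hmem
    have h2 := hG.2 (Set.mem_univ v₁) (Set.mem_univ v₂) ha hb hab
    simp only [smul_eq_mul] at h2 ⊢
    have h3 := mul_le_mul_of_nonneg_left hx₁.le ha
    have h4 := mul_le_mul_of_nonneg_left hx₂.le hb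
    have h5 : m (a • y₁ + b • y₂) ≤ a * G v₁ + b * G v₂ := le_trans h1 h2
    nlinarith [h3, h4, h5]
  obtain ⟨p, hp⟩ := exists_subgradient hmconv f
  refine ⟨p, fun w => ?_⟩
  have h1 := hp (A w)
  have h2 := hmle w
  simp only [hm] at h1 h2 ⊢
  linarith [hmf]

set_option maxHeartbeats 1000000 in
theorem statement4 {E E₁ : Type*}
    [NormedAddCommGroup E] [InnerProductSpace ℝ E] [FiniteDimensional ℝ E]
    [NormedAddCommGroup E₁] [InnerProductSpace ℝ E₁] [FiniteDimensional ℝ E₁]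
    (A : E →ₗ[ℝ] E₁) (hA : Function.Surjective A)
    (δ : ℝ) (hδ : 0 < δ) (hAlow : ∀ w : E₁, δ * ‖w‖ ≤ ‖(LinearMap.adjoint A) w‖)
    (f : E₁) (lam ν ω : ℝ) (hlam : 0 < lam) (hν : 0 < ν)
    (J : E → ℝ) (hJ0 : ∀ v, 0 ≤ J v)
    (hsc : ∀ u : E, ConvexOn ℝ Set.univ
      (fun v => (J v + ω * ‖v - u‖ ^ 2) - ν / 2 * ‖v‖ ^ 2))
    (Kt Lt : ℝ) (hKt : 0 ≤ Kt) (hLt : 0 ≤ Lt)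
    (hgrowth : ∀ (u v ξ : E),
      (∀ w, (J v + ω * ‖v - u‖ ^ 2) + ⟪ξ, w - v⟫ ≤ J w + ω * ‖w - u‖ ^ 2) →
      ‖ξ‖ ≤ Kt * (J v + ω * ‖v - u‖ ^ 2) + Lt)
    (vbar : E → E) (hvbarf : ∀ u, A (vbar u) = f)
    (hvbarmin : ∀ u w, A w = f →
      J (vbar u) + ω * ‖vbar u - u‖ ^ 2 ≤ J w + ω * ‖w - u‖ ^ 2) :
    ∃ C₁ C₂ : ℝ, 0 < C₁ ∧ 0 < C₂ ∧
      ∀ (u : E) (v : ℕ → E) (q : ℕ → E₁),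
        (∀ k : ℕ, ∀ w,
          (J (v (k + 1)) + ω * ‖v (k + 1) - u‖ ^ 2) - ⟪q k, A (v (k + 1))⟫ +
              lam * ‖A (v (k + 1)) - f‖ ^ 2 ≤
            (J w + ω * ‖w - u‖ ^ 2) - ⟪q k, A w⟫ + lam * ‖A w - f‖ ^ 2) →
        (∀ k : ℕ, q (k + 1) = q k + (2 * lam) • (f - A (v (k + 1)))) →
        ∀ k : ℕ, ‖v (k + 1) - vbar u‖ ^ 2 ≤
          (C₁ * (1 + ‖q 0‖) + C₂ * (J (vbar u) + ω * ‖vbar u - u‖ ^ 2)) *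
            ‖A (v (k + 1)) - f‖ := by
  rcases subsingleton_or_nontrivial E with hE | hE
  · refine ⟨1, 1, one_pos, one_pos, fun u v q _ _ k => ?_⟩
    have h1 : v (k + 1) - vbar u = 0 := Subsingleton.elim _ _
    have h2 : vbar u - u = 0 := Subsingleton.elim _ _
    rw [h1, h2]
    simp only [norm_zero]
    have h3 : (0 : ℝ) ≤ 1 * (1 + ‖q 0‖) + 1 * (J (vbar u) + ω * 0 ^ 2) := by
      have := hJ0 (vbar u)
      have := norm_nonneg (q 0)
      nlinarith
    have h4 : (0 : ℝ) ≤ ‖A (v (k + 1)) - f‖ := norm_nonneg _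
    nlinarith
  rcases eq_or_lt_of_le hKt with hKt0 | hKtpos
  · -- Kt = 0 : hypotheses force a contradiction since E is nontrivial
    exfalso
    obtain ⟨e₀, he₀⟩ := exists_ne (0 : E)
    set R : ℝ := (2 * Lt + 1) / ν with hR
    have hRpos : 0 < R := div_pos (by linarith) hν
    set x₂ : E := R • (‖e₀‖⁻¹ • e₀) with hx₂
    have hx₂norm : ‖x₂‖ = R := by
      rw [hx₂, norm_smul, norm_smul, Real.norm_eq_abs, Real.norm_eq_abs,
        abs_of_pos hRpos, abs_of_pos (inv_pos.mpr (norm_pos_iff.mpr he₀)),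
        inv_mul_cancel₀ (norm_ne_zero_iff.mpr he₀), mul_one]
    have hGconv : ConvexOn ℝ Set.univ (fun x : E => J x + ω * ‖x - 0‖ ^ 2) := by
      have h := (hsc 0).add (convexOn_const_norm_sq (E := E) (by positivity : (0:ℝ) ≤ ν / 2))
      convert h using 1
      · rfl
      funext x
      simp only [Pi.add_apply]
      ring
    obtain ⟨ζ₁, hζ₁⟩ := exists_subgradient hGconv 0
    obtain ⟨ζ₂, hζ₂⟩ := exists_subgradient hGconv x₂
    have hb₁ := hgrowth 0 0 ζ₁ hζ₁
    have hb₂ := hgrowth 0 x₂ ζ₂ hζ₂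
    rw [← hKt0] at hb₁ hb₂
    simp only [zero_mul, zero_add] at hb₁ hb₂
    have hs₁ := subgrad_strong hν (hsc 0) hζ₁ x₂
    have hs₂ := subgrad_strong hν (hsc 0) hζ₂ 0
    have hn1 : ‖x₂ - 0‖ = R := by rw [sub_zero, hx₂norm]
    have hn2 : ‖(0 : E) - x₂‖ = R := by rw [zero_sub, norm_neg, hx₂norm]
    rw [hn1] at hs₁ hs₂
    rw [hn2] at hs₂
    have hi₁ : -(Lt * R) ≤ ⟪ζ₁, x₂ - 0⟫ := by
      have h1 := abs_real_inner_le_norm ζ₁ (x₂ - 0)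
      have h2 := neg_abs_le ⟪ζ₁, x₂ - 0⟫
      rw [hn1] at h1
      nlinarith [norm_nonneg ζ₁, hRpos]
    have hi₂ : -(Lt * R) ≤ ⟪ζ₂, (0 : E) - x₂⟫ := by
      have h1 := abs_real_inner_le_norm ζ₂ ((0 : E) - x₂)
      have h2 := neg_abs_le ⟪ζ₂, (0 : E) - x₂⟫
      rw [hn2] at h1
      nlinarith [norm_nonneg ζ₂, hRpos]
    have hsum : ν * R ^ 2 ≤ 2 * Lt * R := by nlinarith [hs₁, hs₂, hi₁, hi₂]
    have hνR : ν * R = 2 * Lt + 1 := by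
      rw [hR]
      field_simp
    nlinarith [hRpos, hsum, hνR]
  · -- main case : Kt > 0
    refine ⟨2 / ν * (1 + Lt / δ), 2 * Kt / (ν * δ), by positivity, by positivity, ?_⟩
    intro u v q hminseq hqrec k
    have hGsc : ConvexOn ℝ Set.univ
        (fun x => (J x + ω * ‖x - u‖ ^ 2) - ν / 2 * ‖x‖ ^ 2) := hsc u
    have hGconv : ConvexOn ℝ Set.univ (fun x => J x + ω * ‖x - u‖ ^ 2) := by
      have h := hGsc.add (convexOn_const_norm_sq (E := E) (by positivity : (0:ℝ) ≤ ν / 2))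
      convert h using 1
      · rfl
      funext x
      simp only [Pi.add_apply]
      ring
    have hlb : BddBelow (Set.range (fun x => J x + ω * ‖x - u‖ ^ 2)) := by
      obtain ⟨ζ, hζ⟩ := exists_subgradient hGsc 0
      refine ⟨((J 0 + ω * ‖(0 : E) - u‖ ^ 2) - ν / 2 * ‖(0 : E)‖ ^ 2)
        - ‖ζ‖ ^ 2 / (2 * ν), ?_⟩
      rintro x ⟨w, rfl⟩
      show _ ≤ J w + ω * ‖w - u‖ ^ 2
      have h1 : ((J 0 + ω * ‖(0 : E) - u‖ ^ 2) - ν / 2 * ‖(0 : E)‖ ^ 2) + ⟪ζ, w - 0⟫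
          ≤ (J w + ω * ‖w - u‖ ^ 2) - ν / 2 * ‖w‖ ^ 2 := hζ w
      rw [sub_zero] at h1
      have h2 : -(‖ζ‖ * ‖w‖) ≤ ⟪ζ, w⟫ := by
        have := abs_real_inner_le_norm ζ w
        have := neg_abs_le ⟪ζ, w⟫
        linarith
      have h3 : 0 ≤ (ν * ‖w‖ - ‖ζ‖) ^ 2 := sq_nonneg _
      have h4 : ν * -(‖ζ‖ * ‖w‖) ≤ ν * ⟪ζ, w⟫ := mul_le_mul_of_nonneg_left h2 hν.le
      have hD : ‖ζ‖ ^ 2 / (2 * ν) * (2 * ν) = ‖ζ‖ ^ 2 :=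
        div_mul_cancel₀ _ (by positivity)
      nlinarith [h1, h3, h4, hD, hν, norm_nonneg w, norm_nonneg ζ]
    obtain ⟨p, hp⟩ := exists_multiplier (G := fun x => J x + ω * ‖x - u‖ ^ 2) (vb := vbar u)
      A hA f hGconv hlb (hvbarf u) (fun w hw => hvbarmin u w hw)
    have hp' : ∀ w, (J (vbar u) + ω * ‖vbar u - u‖ ^ 2) + ⟪p, A w - f⟫
        ≤ J w + ω * ‖w - u‖ ^ 2 := hp
    have hpsub : ∀ w, (J (vbar u) + ω * ‖vbar u - u‖ ^ 2)
        + ⟪(LinearMap.adjoint A) p, w - vbar u⟫ ≤ J w + ω * ‖w - u‖ ^ 2 := by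
      intro w
      rw [LinearMap.adjoint_inner_left, map_sub, hvbarf u]
      exact hp' w
    have hpnorm : δ * ‖p‖ ≤ Kt * (J (vbar u) + ω * ‖vbar u - u‖ ^ 2) + Lt :=
      (hAlow p).trans (hgrowth u (vbar u) _ hpsub)
    have hSnn : 0 ≤ Kt * (J (vbar u) + ω * ‖vbar u - u‖ ^ 2) + Lt :=
      le_trans (mul_nonneg hδ.le (norm_nonneg p)) hpnorm
    have hsub : ∀ j : ℕ, ∀ w, (J (v (j + 1)) + ω * ‖v (j + 1) - u‖ ^ 2)
        + ⟪q (j + 1), A w - A (v (j + 1))⟫ ≤ J w + ω * ‖w - u‖ ^ 2 := by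
      intro j w
      have h : (J (v (j + 1)) + ω * ‖v (j + 1) - u‖ ^ 2)
          + ⟪q j + (2 * lam) • (f - A (v (j + 1))), A w - A (v (j + 1))⟫
          ≤ J w + ω * ‖w - u‖ ^ 2 :=
        aug_subgrad (G := fun x => J x + ω * ‖x - u‖ ^ 2) (v := v (j + 1))
          A f (q j) hlam hGconv (hminseq j) w
      rwa [← hqrec j] at h
    have hmono : ∀ j : ℕ, 0 ≤ ⟪q (j + 1) - p, A (v (j + 1)) - f⟫ := by
      intro j
      have h1 := hsub j (vbar u)
      have h2 := hp' (v (j + 1))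
      rw [hvbarf u,
        show f - A (v (j + 1)) = -(A (v (j + 1)) - f) from (neg_sub _ _).symm,
        inner_neg_right] at h1
      rw [inner_sub_left]
      linarith
    have hfej : ∀ j : ℕ, ‖q (j + 1) - p‖ ≤ ‖q j - p‖ := by
      intro j
      have h1 := hmono j
      have hrel : q j - q (j + 1) = (2 * lam) • (A (v (j + 1)) - f) := by
        rw [hqrec j, smul_sub, smul_sub]
        abel
      have h2 : ‖q (j + 1) - p‖ ^ 2 ≤ ‖q (j + 1) - p‖ * ‖q j - p‖ := by
        have e1 : (‖q (j + 1) - p‖ : ℝ) ^ 2 = ⟪q (j + 1) - p, q (j + 1) - p⟫ :=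
          (real_inner_self_eq_norm_sq _).symm
        have e2 : q (j + 1) - p = (q j - p) - (q j - q (j + 1)) := by abel
        have h3 : 0 ≤ ⟪q (j + 1) - p, q j - q (j + 1)⟫ := by
          rw [hrel, real_inner_smul_right]
          exact mul_nonneg (by linarith) h1
        calc ‖q (j + 1) - p‖ ^ 2
            = ⟪q (j + 1) - p, (q j - p) - (q j - q (j + 1))⟫ := by rw [e1, ← e2]
          _ = ⟪q (j + 1) - p, q j - p⟫ - ⟪q (j + 1) - p, q j - q (j + 1)⟫ :=
              inner_sub_right _ _ _
          _ ≤ ⟪q (j + 1) - p, q j - p⟫ := by linarith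
          _ ≤ ‖q (j + 1) - p‖ * ‖q j - p‖ := real_inner_le_norm _ _
      nlinarith [norm_nonneg (q (j + 1) - p), norm_nonneg (q j - p), h2]
    have hqb : ∀ j : ℕ, ‖q j - p‖ ≤ ‖q 0 - p‖ := by
      intro j
      induction j with
      | zero => exact le_rfl
      | succ n ih => exact (hfej n).trans ih
    have hsubE : ∀ w, (J (v (k + 1)) + ω * ‖v (k + 1) - u‖ ^ 2)
        + ⟪(LinearMap.adjoint A) (q (k + 1)), w - v (k + 1)⟫
        ≤ J w + ω * ‖w - u‖ ^ 2 := by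
      intro w
      rw [LinearMap.adjoint_inner_left, map_sub]
      exact hsub k w
    have hstrong : (J (v (k + 1)) + ω * ‖v (k + 1) - u‖ ^ 2)
        + ⟪(LinearMap.adjoint A) (q (k + 1)), vbar u - v (k + 1)⟫
        + ν / 2 * ‖vbar u - v (k + 1)‖ ^ 2
        ≤ J (vbar u) + ω * ‖vbar u - u‖ ^ 2 :=
      subgrad_strong hν hGsc hsubE (vbar u)
    have einner : ⟪(LinearMap.adjoint A) (q (k + 1)), vbar u - v (k + 1)⟫
        = -⟪q (k + 1), A (v (k + 1)) - f⟫ := by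
      rw [LinearMap.adjoint_inner_left, map_sub, hvbarf u,
        show f - A (v (k + 1)) = -(A (v (k + 1)) - f) from (neg_sub _ _).symm,
        inner_neg_right]
    rw [einner, norm_sub_rev (vbar u) (v (k + 1))] at hstrong
    have h2 := hp' (v (k + 1))
    have hnu : ν / 2 * ‖v (k + 1) - vbar u‖ ^ 2 ≤ ⟪q (k + 1) - p, A (v (k + 1)) - f⟫ := by
      rw [inner_sub_left]
      linarith
    have hCS : ⟪q (k + 1) - p, A (v (k + 1)) - f⟫
        ≤ ‖q (k + 1) - p‖ * ‖A (v (k + 1)) - f‖ := real_inner_le_norm _ _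
    have hq' : ‖q (k + 1) - p‖ ≤ ‖q 0‖ + ‖p‖ := (hqb (k + 1)).trans (norm_sub_le _ _)
    have hpb : ‖p‖ ≤ (Kt * (J (vbar u) + ω * ‖vbar u - u‖ ^ 2) + Lt) / δ := by
      rw [le_div_iff₀ hδ]
      linarith [hpnorm]
    have hNnn : (0 : ℝ) ≤ ‖A (v (k + 1)) - f‖ := norm_nonneg _
    have hmain : ν / 2 * ‖v (k + 1) - vbar u‖ ^ 2
        ≤ (‖q 0‖ + (Kt * (J (vbar u) + ω * ‖vbar u - u‖ ^ 2) + Lt) / δ)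
          * ‖A (v (k + 1)) - f‖ := by
      calc ν / 2 * ‖v (k + 1) - vbar u‖ ^ 2
          ≤ ⟪q (k + 1) - p, A (v (k + 1)) - f⟫ := hnu
        _ ≤ ‖q (k + 1) - p‖ * ‖A (v (k + 1)) - f‖ := hCS
        _ ≤ (‖q 0‖ + (Kt * (J (vbar u) + ω * ‖vbar u - u‖ ^ 2) + Lt) / δ)
              * ‖A (v (k + 1)) - f‖ :=
            mul_le_mul_of_nonneg_right (hq'.trans (by linarith)) hNnn
    have hfac : ‖q 0‖ + (Kt * (J (vbar u) + ω * ‖vbar u - u‖ ^ 2) + Lt) / δ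
        ≤ ν / 2 * ((2 / ν * (1 + Lt / δ)) * (1 + ‖q 0‖)
          + (2 * Kt / (ν * δ)) * (J (vbar u) + ω * ‖vbar u - u‖ ^ 2)) := by
      have hq0 : (0 : ℝ) ≤ ‖q 0‖ := norm_nonneg _
      have he : ν / 2 * ((2 / ν * (1 + Lt / δ)) * (1 + ‖q 0‖)
            + (2 * Kt / (ν * δ)) * (J (vbar u) + ω * ‖vbar u - u‖ ^ 2))
          = (1 + Lt / δ) * (1 + ‖q 0‖)
            + Kt / δ * (J (vbar u) + ω * ‖vbar u - u‖ ^ 2) := by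
        field_simp
      rw [he]
      have he2 : (Kt * (J (vbar u) + ω * ‖vbar u - u‖ ^ 2) + Lt) / δ
          = Kt / δ * (J (vbar u) + ω * ‖vbar u - u‖ ^ 2) + Lt / δ := by
        field_simp
      rw [he2]
      have h7 : 0 ≤ Lt / δ * ‖q 0‖ := by positivity
      nlinarith [h7]
    have hfin := hmain.trans (mul_le_mul_of_nonneg_right hfac hNnn)
    rw [mul_assoc] at hfin
    exact (mul_le_mul_iff_right₀ (by positivity : (0 : ℝ) < ν / 2)).mp hfin
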